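/- Let k be a field of characteristic p ≥ 5. The Witt algebra W(1;1) = Der(k[t]/(t^p)) is a simple Lie algebra (of dimension p). -/

import Mathlib

set_option synthInstance.maxHeartbeats 1000000
set_option maxHeartbeats 1000000

/-- The truncated polynomial ring `k[t]/(t^p)` in one variable. -/
noncomputable abbrev TruncB (k : Type*) [Field k] (p : ℕ) :=
  Polynomial k ⧸ Ideal.span {(Polynomial.X : Polynomial k) ^ p}

set_option linter.unusedSectionVars false
set_option linter.unusedVariables false
set_option maxHeartbeats 4000000

namespace WittAux

open Polynomial

variable {k : Type*} [Field k] {p : ℕ} [Fact p.Prime] [CharP k p]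

noncomputable local instance fastCommRing : CommRing (TruncB k p) := inferInstance
noncomputable local instance fastAlgebra : Algebra k (TruncB k p) := inferInstance
noncomputable local instance fastModuleSelf : Module (TruncB k p) (TruncB k p) := inferInstance
noncomputable local instance fastModulek : Module k (TruncB k p) := inferInstance
noncomputable local instance fastAddCommGroupDer :
    AddCommGroup (Derivation k (TruncB k p) (TruncB k p)) := inferInstance
noncomputable local instance fastModuleDer :
    Module (TruncB k p) (Derivation k (TruncB k p) (TruncB k p)) := inferInstance
noncomputable local instance fastModulekDer :
    Module k (Derivation k (TruncB k p) (TruncB k p)) := inferInstance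
noncomputable local instance fastTower :
    IsScalarTower k (TruncB k p) (Derivation k (TruncB k p) (TruncB k p)) := inferInstance
noncomputable local instance fastLieRing : LieRing (Derivation k (TruncB k p) (TruncB k p)) :=
  inferInstance
noncomputable local instance fastLieAlgebra :
    LieAlgebra k (Derivation k (TruncB k p) (TruncB k p)) := inferInstance


/-- The quotient map. -/
noncomputable def mk : Polynomial k →ₐ[k] TruncB k p :=
  Ideal.Quotient.mkₐ k _

lemma mk_surjective : Function.Surjective (mk (k := k) (p := p)) :=
  Ideal.Quotient.mkₐ_surjective k _

/-- Derivative descends to the quotient. -/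
lemma derivative_mem {q : Polynomial k}
    (hq : q ∈ Ideal.span {(X : Polynomial k) ^ p}) :
    derivative q ∈ Ideal.span {(X : Polynomial k) ^ p} := by
  rw [Ideal.mem_span_singleton] at hq ⊢
  obtain ⟨r, rfl⟩ := hq
  rw [derivative_mul, derivative_X_pow]
  have hC : (C ((p : ℕ) : k) : Polynomial k) = 0 := by
    rw [CharP.cast_eq_zero k p, map_zero]
  rw [hC, zero_mul, zero_mul, zero_add]
  exact Dvd.intro _ rfl

noncomputable def dlin : TruncB k p →ₗ[k] TruncB k p :=
  (Submodule.liftQ ((Ideal.span {(X : Polynomial k) ^ p}).restrictScalars k)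
    ((mk (k := k) (p := p)).toLinearMap.comp
      (derivative : Polynomial k →ₗ[k] Polynomial k))
    (fun q hq => by
      simp only [LinearMap.mem_ker, LinearMap.comp_apply, AlgHom.toLinearMap_apply]
      exact Ideal.Quotient.eq_zero_iff_mem.2 (derivative_mem hq))).comp
    (Submodule.Quotient.restrictScalarsEquiv k
      (Ideal.span {(X : Polynomial k) ^ p})).symm.toLinearMap

lemma dlin_mk (q : Polynomial k) : dlin (mk (p := p) q) = mk (derivative q) := by
  have h1 : (mk (p := p) q) = Submodule.Quotient.mk q := rfl
  rw [dlin, LinearMap.comp_apply, h1, LinearEquiv.coe_coe,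
    Submodule.Quotient.restrictScalarsEquiv_symm_mk, Submodule.liftQ_apply]
  rfl

/-- The derivation `∂` on `k[t]/(t^p)`. -/
noncomputable def del : Derivation k (TruncB k p) (TruncB k p) where
  toLinearMap := dlin
  map_one_eq_zero' := by
    have h1 : (1 : TruncB k p) = mk 1 := (map_one mk).symm
    show dlin (1 : TruncB k p) = 0
    rw [h1, dlin_mk, derivative_one, map_zero]
  leibniz' := by
    intro a b
    obtain ⟨q, rfl⟩ := mk_surjective (p := p) a
    obtain ⟨r, rfl⟩ := mk_surjective (p := p) b
    show dlin (mk q * mk r) = mk q • dlin (mk r) + mk r • dlin (mk q)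
    rw [← map_mul, dlin_mk, dlin_mk, dlin_mk, derivative_mul, map_add, map_mul, map_mul,
      smul_eq_mul, smul_eq_mul]
    ring

lemma del_mk (q : Polynomial k) : del (mk (p := p) q) = mk (derivative q) :=
  dlin_mk q

/-- The image of `X`, i.e. `t`. -/
noncomputable def T : TruncB k p := mk X

lemma del_T : del (T : TruncB k p) = 1 := by
  rw [T, del_mk, derivative_X, map_one]

lemma aeval_T (q : Polynomial k) : (aeval (T : TruncB k p)) q = mk q := by
  rw [T, aeval_algHom_apply, aeval_X_left_apply]

/-- Derivations on the truncated polynomial ring are determined by their value at `t`. -/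
lemma ext_T {D E : Derivation k (TruncB k p) (TruncB k p)} (h : D T = E T) : D = E := by
  ext x
  obtain ⟨q, rfl⟩ := mk_surjective (p := p) x
  rw [← aeval_T, Derivation.map_aeval, Derivation.map_aeval, h]

lemma smul_del_apply (f x : TruncB k p) : (f • del) x = f * del x := by
  rw [Derivation.smul_apply, smul_eq_mul]

lemma smul_del_T (f : TruncB k p) : (f • del) T = f := by
  rw [smul_del_apply, del_T, mul_one]

/-- Every derivation is `f • ∂` where `f = D t`. -/
lemma eq_smul_del (D : Derivation k (TruncB k p) (TruncB k p)) : D = (D T) • del :=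
  ext_T (by rw [smul_del_T])

lemma bracket_smul_del (f g : TruncB k p) :
    ⁅f • del (k := k) (p := p), g • del (k := k) (p := p)⁆
      = (f * del g - g * del f) • del (k := k) (p := p) := by
  apply ext_T
  rw [Derivation.commutator_apply, smul_del_T, smul_del_T, smul_del_apply, smul_del_apply,
    smul_del_T]

lemma bracket_del_smul (g : TruncB k p) :
    ⁅del (k := k) (p := p), g • del (k := k) (p := p)⁆ = del g • del (k := k) (p := p) := by
  have h := bracket_smul_del (1 : TruncB k p) g
  rw [one_smul] at h
  rw [h, Derivation.map_one_eq_zero, one_mul, mul_zero, sub_zero]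

lemma bracket_smul_del' (f : TruncB k p) :
    ⁅f • del (k := k) (p := p), del (k := k) (p := p)⁆ = (-del f) • del (k := k) (p := p) := by
  have h := bracket_smul_del f (1 : TruncB k p)
  rw [one_smul] at h
  rw [h, Derivation.map_one_eq_zero, one_mul, mul_zero, zero_sub]

lemma trunc_nontrivial : Nontrivial (TruncB k p) := by
  refine Ideal.Quotient.nontrivial_iff.mpr ?_
  rw [Ne, Ideal.span_singleton_eq_top]
  intro h
  have h2 := natDegree_eq_zero_of_isUnit h
  rw [natDegree_X_pow] at h2
  exact (Fact.out : p.Prime).ne_zero h2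

lemma mk_eq_zero_iff {q : Polynomial k} :
    mk (p := p) q = 0 ↔ (X : Polynomial k) ^ p ∣ q := by
  rw [mk, Ideal.Quotient.mkₐ_eq_mk, Ideal.Quotient.eq_zero_iff_mem, Ideal.mem_span_singleton]

lemma mk_ne_zero {q : Polynomial k} (hq : q ≠ 0) (hdeg : q.natDegree < p) :
    mk (p := p) q ≠ 0 := by
  intro h
  rw [mk_eq_zero_iff] at h
  have h2 := natDegree_le_of_dvd h hq
  rw [natDegree_X_pow] at h2
  omega

lemma del_ne_zero : del (k := k) (p := p) ≠ 0 := by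
  haveI := trunc_nontrivial (k := k) (p := p)
  intro h
  have h1 := del_T (k := k) (p := p)
  rw [h] at h1
  simp only [Derivation.zero_apply] at h1
  exact one_ne_zero h1.symm

lemma mk_X : mk (p := p) X = (T : TruncB k p) := rfl

lemma T_pow (n : ℕ) : (T ^ n : TruncB k p) = mk (X ^ n) := by
  rw [T, map_pow]

lemma mk_C (c : k) : mk (p := p) (C c) = algebraMap k (TruncB k p) c := by
  have : (C c : Polynomial k) = algebraMap k (Polynomial k) c := rfl
  rw [this, AlgHom.commutes]

lemma del_T_pow (n : ℕ) : del (T ^ n : TruncB k p) = ((n : ℕ) : k) • T ^ (n - 1) := by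
  rw [T_pow, del_mk, derivative_X_pow, map_mul, mk_C, ← T_pow]
  exact (Algebra.smul_def _ _).symm

lemma cast_ne_zero_of_lt {m : ℕ} (h0 : 0 < m) (h : m < p) : ((m : ℕ) : k) ≠ 0 := by
  rw [Ne, CharP.cast_eq_zero_iff k p]
  intro hd
  have := Nat.le_of_dvd h0 hd
  omega

lemma exists_rep (f : TruncB k p) : ∃ q : Polynomial k, mk q = f ∧ q.natDegree < p := by
  obtain ⟨q0, hq0⟩ := mk_surjective (p := p) f
  have hXp1 : (X : Polynomial k) ^ p ≠ 1 := by
    intro h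
    have := congrArg natDegree h
    rw [natDegree_X_pow, natDegree_one] at this
    exact (Fact.out : p.Prime).ne_zero this
  refine ⟨q0 %ₘ X ^ p, ?_, ?_⟩
  · conv_rhs => rw [← hq0, ← modByMonic_add_div q0 (X ^ p)]
    rw [map_add, mk_eq_zero_iff.2 (dvd_mul_right _ _), add_zero]
  · have := natDegree_modByMonic_lt q0 (monic_X_pow p) hXp1
    rwa [natDegree_X_pow] at this

/-- The Witt algebra is linearly equivalent to the truncated polynomial ring. -/
noncomputable def derEquiv : Derivation k (TruncB k p) (TruncB k p) ≃ₗ[k] TruncB k p where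
  toFun D := D T
  map_add' D E := rfl
  map_smul' c D := rfl
  invFun f := f • del
  left_inv D := (eq_smul_del D).symm
  right_inv f := smul_del_T f

lemma finrank_der : Module.finrank k (Derivation k (TruncB k p) (TruncB k p)) = p := by
  rw [(derEquiv (k := k) (p := p)).finrank_eq]
  have h : (X ^ p : Polynomial k) ≠ 0 := pow_ne_zero _ X_ne_zero
  have h2 := (AdjoinRoot.powerBasis h).finrank
  rw [AdjoinRoot.powerBasis_dim, natDegree_X_pow] at h2
  exact h2

lemma simple (hp : 5 ≤ p) :
    LieAlgebra.IsSimple k (Derivation k (TruncB k p) (TruncB k p)) := by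
  haveI := trunc_nontrivial (k := k) (p := p)
  have hp5 : 5 ≤ p := hp
  constructor
  · intro I
    rw [or_iff_not_imp_left]
    intro hI
    rw [LieSubmodule.eq_bot_iff] at hI
    push_neg at hI
    obtain ⟨D, hDI, hD0⟩ := hI
    -- Step 1: ∂ ∈ I.
    have hstep1 : ∀ n : ℕ, ∀ q : Polynomial k, q.natDegree = n → q ≠ 0 → q.natDegree < p →
        (mk (p := p) q • del (k := k) (p := p)) ∈ I → del (k := k) (p := p) ∈ I := by
      intro n
      induction n using Nat.strong_induction_on with
      | _ n ih =>
        intro q hqn hq0 hqp hmem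
        rcases Nat.eq_zero_or_pos n with h0 | hpos
        · -- constant case
          rw [h0] at hqn
          have hqC : q = C (q.coeff 0) := eq_C_of_natDegree_eq_zero hqn
          have hc : q.coeff 0 ≠ 0 := fun h => hq0 (by rw [hqC, h, map_zero])
          rw [hqC, mk_C, algebraMap_smul] at hmem
          have h2 := I.toSubmodule.smul_mem (q.coeff 0)⁻¹ ((LieSubmodule.mem_toSubmodule I).2 hmem)
          rw [LieSubmodule.mem_toSubmodule I] at h2
          rwa [smul_smul, inv_mul_cancel₀ hc, one_smul] at h2
        · -- differentiate
          subst hqn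
          have hbr : ⁅del (k := k) (p := p), mk (p := p) q • del (k := k) (p := p)⁆
              = mk (p := p) (derivative q) • del (k := k) (p := p) := by
            rw [bracket_del_smul, del_mk]
          have hmem' : (mk (p := p) (derivative q) • del (k := k) (p := p)) ∈ I := by
            rw [← hbr]; exact I.lie_mem hmem
          have hcd : ((q.natDegree : ℕ) : k) ≠ 0 := cast_ne_zero_of_lt (p := p) hpos hqp
          have hq' : derivative q ≠ 0 := by
            intro h
            have hco := coeff_derivative q (q.natDegree - 1)
            rw [h, coeff_zero] at hco
            have hn : q.natDegree - 1 + 1 = q.natDegree := by omega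
            rw [hn] at hco
            have h1 : q.coeff q.natDegree ≠ 0 := by
              rw [← leadingCoeff]
              exact leadingCoeff_ne_zero.2 hq0
            have h2 : (((q.natDegree - 1 : ℕ) : k) + 1) = ((q.natDegree : ℕ) : k) := by
              rw [Nat.cast_sub (by omega)]
              push_cast
              ring
            rw [h2] at hco
            exact hcd (by
              rcases mul_eq_zero.1 hco.symm with h | h
              · exact absurd h h1
              · exact h)
          have hdeg' : (derivative q).natDegree < q.natDegree :=
            natDegree_derivative_lt (by omega)
          exact ih _ hdeg' _ rfl hq' (by omega) hmem'
    have hdel : del (k := k) (p := p) ∈ I := by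
      obtain ⟨q, hq, hqdeg⟩ := exists_rep (D T)
      have hq0 : q ≠ 0 := by
        intro h
        apply hD0
        rw [eq_smul_del D, ← hq, h, map_zero]
        exact zero_smul (TruncB k p) (del (k := k) (p := p))
      have hDq : D = mk (p := p) q • del (k := k) (p := p) := by rw [hq]; exact eq_smul_del D
      exact hstep1 _ q rfl hq0 hqdeg (hDq ▸ hDI)
    -- Step 2: all basis vectors are in I.
    have hlow : ∀ i : ℕ, i + 1 < p → ((T : TruncB k p) ^ i • del) ∈ I := by
      intro i hi
      have hbr : ⁅(T : TruncB k p) ^ (i + 1) • del (k := k) (p := p), del (k := k) (p := p)⁆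
          = (-(((i + 1 : ℕ) : k))) • ((T : TruncB k p) ^ i • del) := by
        rw [bracket_smul_del', del_T_pow, Nat.add_sub_cancel, ← neg_smul, smul_assoc]
      have hmem := I.lie_mem (x := (T : TruncB k p) ^ (i + 1) • del) hdel
      rw [hbr] at hmem
      have h2 := I.toSubmodule.smul_mem (-(((i + 1 : ℕ) : k)))⁻¹ ((LieSubmodule.mem_toSubmodule I).2 hmem)
      rw [LieSubmodule.mem_toSubmodule I] at h2
      rwa [smul_smul, inv_mul_cancel₀
        (neg_ne_zero.2 (cast_ne_zero_of_lt (p := p) (m := i + 1) (by omega) (by omega))), one_smul] at h2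
    have he : ∀ i : ℕ, i < p → ((T : TruncB k p) ^ i • del) ∈ I := by
      intro i hi
      by_cases h : i + 1 < p
      · exact hlow i h
      · have hieq : i = p - 1 := by omega
        subst hieq
        have h2 : ((T : TruncB k p) ^ (p - 2) • del) ∈ I := hlow (p - 2) (by omega)
        have hbr : ⁅(T : TruncB k p) ^ 2 • del (k := k) (p := p),
              (T : TruncB k p) ^ (p - 2) • del (k := k) (p := p)⁆
            = (-(4 : k)) • ((T : TruncB k p) ^ (p - 1) • del (k := k) (p := p)) := by
          rw [bracket_smul_del, del_T_pow, del_T_pow, mul_smul_comm, mul_smul_comm,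
            ← pow_add, ← pow_add, show 2 + (p - 2 - 1) = p - 1 by omega,
            show p - 2 + (2 - 1) = p - 1 by omega, ← sub_smul, smul_assoc]
          congr 1
          rw [Nat.cast_sub (by omega), CharP.cast_eq_zero k p]
          push_cast
          ring
        have hmem := I.lie_mem (x := (T : TruncB k p) ^ 2 • del) h2
        rw [hbr] at hmem
        have h3 := I.toSubmodule.smul_mem (-(4 : k))⁻¹ ((LieSubmodule.mem_toSubmodule I).2 hmem)
        rw [LieSubmodule.mem_toSubmodule I] at h3
        have h4 : (-(4 : k)) ≠ 0 := by
          have h5 : ((4 : ℕ) : k) ≠ 0 := cast_ne_zero_of_lt (p := p) (by omega) (by omega)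
          simpa using h5
        rwa [smul_smul, inv_mul_cancel₀ h4, one_smul] at h3
    ext E
    simp only [LieSubmodule.mem_top, iff_true]
    obtain ⟨q, hq, hqdeg⟩ := exists_rep (E T)
    have hEq : E = mk (p := p) q • del (k := k) (p := p) := by rw [hq]; exact eq_smul_del E
    rw [hEq, q.as_sum_range' p (by omega), map_sum, Finset.sum_smul]
    apply sum_mem
    intro i hi
    rw [← C_mul_X_pow_eq_monomial, map_mul, map_pow, mk_C, mk_X, mul_smul, algebraMap_smul]
    exact (LieSubmodule.mem_toSubmodule I).1 (I.toSubmodule.smul_mem _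
      ((LieSubmodule.mem_toSubmodule I).2 (he i (Finset.mem_range.1 hi))))
  · intro habel
    have h1 := habel.trivial ((T : TruncB k p) • del) ((1 : TruncB k p) • del)
    rw [bracket_smul_del, Derivation.map_one_eq_zero, del_T, mul_zero, mul_one, zero_sub,
      neg_smul, one_smul] at h1
    exact del_ne_zero (neg_eq_zero.1 h1)

end WittAux

/-- The Witt algebra `W(1;1) = Der(k[t]/(t^p))` over a field of characteristic `p ≥ 5`
is a simple Lie algebra of dimension `p`. -/
theorem stmt15 {k : Type*} [Field k] (p : ℕ) [Fact p.Prime] (hp : 5 ≤ p) [CharP k p] :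
    LieAlgebra.IsSimple k (Derivation k (TruncB k p) (TruncB k p)) ∧
    Module.finrank k (Derivation k (TruncB k p) (TruncB k p)) = p :=
  ⟨WittAux.simple hp, WittAux.finrank_der⟩
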